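/- Let p ≥ 1 be an integer, B₁ < B₂ reals, B = [B₁,B₂]^p ⊆ ℝ^p, and let W : ℝ^p → ℝ be differentiable and σ-strongly concave on B with σ > 0. Assume sup_{β∈B} max_{1≤i≤p} |∂W/∂β_i(β)| ≤ G, and let β* ∈ B be a maximizer of W over B. Fix constants M ≥ η ≥ 1/σ and define the projected gradient ascent iterates by β₁ ∈ B arbitrary and β_{w+1} = P(β_w + (η/(w+1)) ∇W(β_w)) for w ≥ 1, where P is the coordinatewise projection onto the box B. Set L = max{2(B₂−B₁)², G² M²}. Then for every integer w ≥ 1, ‖β_w − β*‖² ≤ L p / w, where ‖·‖ is the Euclidean norm. -/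

import Mathlib

open Real Filter Topology InnerProductSpace

local notation "⟪" x ", " y "⟫" => @inner ℝ _ _ x y

/-- The box `[B₁, B₂]^p` in `ℝ^p`. -/
def box (p : ℕ) (B₁ B₂ : ℝ) : Set (EuclideanSpace ℝ (Fin p)) :=
  {x | ∀ i, x i ∈ Set.Icc B₁ B₂}

/-- Coordinatewise projection onto the box `[B₁, B₂]^p`: `(P x) i = min B₂ (max B₁ (x i))`. -/
noncomputable def boxProj (p : ℕ) (B₁ B₂ : ℝ) (x : EuclideanSpace ℝ (Fin p)) :
    EuclideanSpace ℝ (Fin p) :=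
  (WithLp.equiv 2 (Fin p → ℝ)).symm fun i => min B₂ (max B₁ (x i))

/-- `W` is `σ`-strongly concave on `S`. -/
def PaperStrongConcaveOn {p : ℕ} (S : Set (EuclideanSpace ℝ (Fin p))) (σ : ℝ)
    (W : EuclideanSpace ℝ (Fin p) → ℝ) : Prop :=
  ∀ x ∈ S, ∀ y ∈ S, ∀ t ∈ Set.Icc (0 : ℝ) 1,
    t * W x + (1 - t) * W y + σ / 2 * t * (1 - t) * ‖x - y‖ ^ 2 ≤ W (t • x + (1 - t) • y)

lemma esp_norm_sq {p : ℕ} (x : EuclideanSpace ℝ (Fin p)) :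
    ‖x‖ ^ 2 = ∑ i, (x i) ^ 2 := by
  rw [EuclideanSpace.norm_eq, Real.sq_sqrt (by positivity)]
  simp [Real.norm_eq_abs, sq_abs]

lemma clamp_sq {B₁ B₂ a c : ℝ} (hB : B₁ ≤ B₂) (h1 : B₁ ≤ c) (h2 : c ≤ B₂) :
    (min B₂ (max B₁ a) - c) ^ 2 ≤ (a - c) ^ 2 := by
  rcases le_total a B₁ with h | h
  · rw [max_eq_left h, min_eq_right hB]; nlinarith
  · rw [max_eq_right h]
    rcases le_total a B₂ with h' | h'
    · rw [min_eq_right h']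
    · rw [min_eq_left h']; nlinarith

lemma boxProj_mem {p : ℕ} {B₁ B₂ : ℝ} (hB : B₁ ≤ B₂) (x : EuclideanSpace ℝ (Fin p)) :
    boxProj p B₁ B₂ x ∈ box p B₁ B₂ := by
  intro i
  have : boxProj p B₁ B₂ x i = min B₂ (max B₁ (x i)) := rfl
  rw [this]
  exact ⟨le_min hB (le_max_left _ _), min_le_left _ _⟩

lemma boxProj_nonexpansive {p : ℕ} {B₁ B₂ : ℝ} (hB : B₁ ≤ B₂)
    (x : EuclideanSpace ℝ (Fin p)) {z : EuclideanSpace ℝ (Fin p)} (hz : z ∈ box p B₁ B₂) :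
    ‖boxProj p B₁ B₂ x - z‖ ^ 2 ≤ ‖x - z‖ ^ 2 := by
  rw [esp_norm_sq, esp_norm_sq]
  apply Finset.sum_le_sum
  intro i _
  have h1 : (boxProj p B₁ B₂ x - z) i = min B₂ (max B₁ (x i)) - z i := rfl
  have h2 : (x - z) i = x i - z i := rfl
  rw [h1, h2]
  exact clamp_sq hB (hz i).1 (hz i).2

lemma grad_norm_sq {p : ℕ} {G : ℝ} (g : EuclideanSpace ℝ (Fin p))
    (hG : ∀ i, |g i| ≤ G) : ‖g‖ ^ 2 ≤ G ^ 2 * p := by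
  rw [esp_norm_sq]
  calc ∑ i, (g i) ^ 2 ≤ ∑ _i : Fin p, G ^ 2 := by
        apply Finset.sum_le_sum
        intro i _
        calc (g i) ^ 2 = |g i| ^ 2 := (sq_abs _).symm
          _ ≤ G ^ 2 := by have := hG i; nlinarith [abs_nonneg (g i)]
    _ = G ^ 2 * p := by simp [mul_comm]

lemma expand_sq {p : ℕ} (a g : EuclideanSpace ℝ (Fin p)) (s : ℝ) :
    ‖a + s • g‖ ^ 2 = ‖a‖ ^ 2 + 2 * s * ⟪g, a⟫ + s ^ 2 * ‖g‖ ^ 2 := by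
  rw [norm_add_sq_real, real_inner_smul_right, norm_smul]
  rw [real_inner_comm]
  simp [mul_pow, sq_abs, Real.norm_eq_abs]
  ring

lemma dirDeriv {p : ℕ} (W : EuclideanSpace ℝ (Fin p) → ℝ) (hdiff : Differentiable ℝ W)
    (x v : EuclideanSpace ℝ (Fin p)) :
    HasDerivAt (fun t : ℝ => W (x + t • v)) ⟪gradient W x, v⟫ 0 := by
  have hg : HasFDerivAt W (toDual ℝ _ (gradient W x)) x :=
    ((hdiff x).hasGradientAt).hasFDerivAt
  have hline : HasDerivAt (fun t : ℝ => x + t • v) v 0 := by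
    simpa using ((hasDerivAt_id (0:ℝ)).smul_const v).const_add x
  rw [show x = x + (0:ℝ) • v by simp] at hg
  have := hg.comp_hasDerivAt (f := fun t : ℝ => x + t • v) 0 hline
  simpa [InnerProductSpace.toDual_apply_apply, Function.comp_def] using this

lemma slope_limit_le {f : ℝ → ℝ} {d A C : ℝ} (hf : HasDerivAt f d 0)
    (h : ∀ t ∈ Set.Ioc (0:ℝ) 1, A + C * (1 - t) ≤ (f t - f 0) / t) : A + C ≤ d := by
  have h1 : Tendsto (slope f 0) (𝓝[>] 0) (𝓝 d) :=
    (hasDerivAt_iff_tendsto_slope.mp hf).mono_left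
      (nhdsWithin_mono 0 (fun x hx => ne_of_gt hx))
  have h2 : Tendsto (fun t : ℝ => A + C * (1 - t)) (𝓝[>] 0) (𝓝 (A + C * (1 - 0))) :=
    ((continuous_const.add (continuous_const.mul
      (continuous_const.sub continuous_id))).tendsto 0).mono_left nhdsWithin_le_nhds
  have hev : ∀ᶠ t in 𝓝[>] (0:ℝ), A + C * (1 - t) ≤ slope f 0 t := by
    filter_upwards [Ioc_mem_nhdsGT (zero_lt_one)] with t ht
    simpa [slope_def_field] using h t ht
  have := le_of_tendsto_of_tendsto h2 h1 hev
  simpa using this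

lemma slope_limit_ge {f : ℝ → ℝ} {d : ℝ} (hf : HasDerivAt f d 0)
    (h : ∀ t ∈ Set.Ioc (0:ℝ) 1, f t ≤ f 0) : d ≤ 0 := by
  have := slope_limit_le (A := 0) (C := 0) hf.neg (fun t ht => by
    have := h t ht
    have ht0 := ht.1
    simp only [zero_mul, add_zero, zero_add]
    rw [le_div_iff₀ ht0]
    simp only [Pi.neg_apply]
    linarith)
  linarith

lemma combo_eq {p : ℕ} (x y : EuclideanSpace ℝ (Fin p)) (t : ℝ) :
    t • y + (1 - t) • x = x + t • (y - x) := by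
  rw [smul_sub, sub_smul, one_smul]; abel

lemma mem_box_combo {p : ℕ} {B₁ B₂ : ℝ} {x y : EuclideanSpace ℝ (Fin p)}
    (hx : x ∈ box p B₁ B₂) (hy : y ∈ box p B₁ B₂) {t : ℝ} (ht : t ∈ Set.Icc (0:ℝ) 1) :
    x + t • (y - x) ∈ box p B₁ B₂ := by
  intro i
  have hxi := hx i; have hyi := hy i
  have : (x + t • (y - x)) i = x i + t * (y i - x i) := rfl
  rw [this]
  exact ⟨by nlinarith [hxi.1, hxi.2, hyi.1, hyi.2, ht.1, ht.2],
         by nlinarith [hxi.1, hxi.2, hyi.1, hyi.2, ht.1, ht.2]⟩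

lemma firstOrder {p : ℕ} {B₁ B₂ σ : ℝ} {W : EuclideanSpace ℝ (Fin p) → ℝ}
    (hdiff : Differentiable ℝ W) (hconc : PaperStrongConcaveOn (box p B₁ B₂) σ W)
    {x y : EuclideanSpace ℝ (Fin p)} (hx : x ∈ box p B₁ B₂) (hy : y ∈ box p B₁ B₂) :
    (W y - W x) + σ / 2 * ‖y - x‖ ^ 2 ≤ ⟪gradient W x, y - x⟫ := by
  apply slope_limit_le (dirDeriv W hdiff x (y - x))
  intro t ht
  have hc := hconc y hy x hx t ⟨ht.1.le, ht.2⟩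
  rw [combo_eq] at hc
  have h0 : x + (0:ℝ) • (y - x) = x := by simp
  rw [h0, le_div_iff₀ ht.1]
  nlinarith [hc]

lemma optimality {p : ℕ} {B₁ B₂ : ℝ} {W : EuclideanSpace ℝ (Fin p) → ℝ}
    (hdiff : Differentiable ℝ W)
    {βstar : EuclideanSpace ℝ (Fin p)} (hβstar : βstar ∈ box p B₁ B₂)
    (hmax : ∀ b ∈ box p B₁ B₂, W b ≤ W βstar)
    {b : EuclideanSpace ℝ (Fin p)} (hb : b ∈ box p B₁ B₂) :
    ⟪gradient W βstar, b - βstar⟫ ≤ (0:ℝ) := by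
  apply slope_limit_ge (dirDeriv W hdiff βstar (b - βstar))
  intro t ht
  have h0 : βstar + (0:ℝ) • (b - βstar) = βstar := by simp
  rw [h0]
  exact hmax _ (mem_box_combo hβstar hb ⟨ht.1.le, ht.2⟩)

lemma key_arith {x : ℝ} (hx : 1 ≤ x) :
    (1 - 2 / (x + 1)) / x + 1 / (x + 1) ^ 2 ≤ 1 / (x + 1) := by
  have hx0 : 0 < x := by linarith
  have h1 : (0:ℝ) < x + 1 := by linarith
  have h2 : 1 - 2 / (x + 1) = (x - 1) / (x + 1) := by field_simp; ring
  rw [h2, div_div, div_add_div _ _ (by positivity) (by positivity),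
    div_le_div_iff₀ (by positivity) h1]
  ring_nf
  nlinarith [sq_nonneg x, sq_nonneg (x - 1), hx0.le]

/-- **Projected gradient ascent under strong concavity (Lemma C.4).**
For a differentiable `σ`-strongly concave `W` on the box with partial derivatives bounded by `G`,
maximizer `β*`, learning rate `η/(w+1)` with `M ≥ η ≥ 1/σ`, the projected gradient ascent
iterates satisfy `‖β_w - β*‖² ≤ L p / w` with `L = max (2(B₂-B₁)²) (G²M²)`. -/
theorem stmt1 (p : ℕ) (hp : 1 ≤ p) (B₁ B₂ : ℝ) (hB : B₁ < B₂)
    (σ G M η : ℝ) (hσ : 0 < σ) (hησ : 1 / σ ≤ η) (hηM : η ≤ M)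
    (W : EuclideanSpace ℝ (Fin p) → ℝ)
    (hdiff : Differentiable ℝ W)
    (hconc : PaperStrongConcaveOn (box p B₁ B₂) σ W)
    (hG : ∀ x ∈ box p B₁ B₂, ∀ i, |gradient W x i| ≤ G)
    (βstar : EuclideanSpace ℝ (Fin p)) (hβstar : βstar ∈ box p B₁ B₂)
    (hmax : ∀ b ∈ box p B₁ B₂, W b ≤ W βstar)
    (β : ℕ → EuclideanSpace ℝ (Fin p)) (hβ1 : β 1 ∈ box p B₁ B₂)
    (hrec : ∀ w : ℕ, 1 ≤ w →
      β (w + 1) = boxProj p B₁ B₂ (β w + (η / ((w : ℝ) + 1)) • gradient W (β w))) :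
    ∀ w : ℕ, 1 ≤ w →
      ‖β w - βstar‖ ^ 2 ≤ max (2 * (B₂ - B₁) ^ 2) (G ^ 2 * M ^ 2) * p / w := by
  set L := max (2 * (B₂ - B₁) ^ 2) (G ^ 2 * M ^ 2) with hLdef
  have hG0 : 0 ≤ G := le_trans (abs_nonneg _) (hG βstar hβstar ⟨0, hp⟩)
  have hη0 : 0 < η := lt_of_lt_of_le (by positivity) hησ
  have hL1 : 2 * (B₂ - B₁) ^ 2 ≤ L := le_max_left _ _
  have hL2 : G ^ 2 * M ^ 2 ≤ L := le_max_right _ _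
  have hL0 : 0 ≤ L := le_trans (by positivity) hL1
  have hp1 : (1:ℝ) ≤ (p:ℝ) := by exact_mod_cast hp
  have hbox : ∀ w : ℕ, 1 ≤ w → β w ∈ box p B₁ B₂ := by
    intro w hw
    induction w, hw using Nat.le_induction with
    | base => exact hβ1
    | succ w hw ih =>
      rw [hrec w hw]
      exact boxProj_mem hB.le _
  intro w hw
  induction w, hw using Nat.le_induction with
  | base =>
    rw [esp_norm_sq]
    push_cast
    calc ∑ i, ((β 1 - βstar) i) ^ 2 ≤ ∑ _i : Fin p, (B₂ - B₁) ^ 2 := by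
          apply Finset.sum_le_sum
          intro i _
          have h1 := hβ1 i; have h2 := hβstar i
          have he : (β 1 - βstar) i = β 1 i - βstar i := rfl
          rw [he]
          nlinarith [h1.1, h1.2, h2.1, h2.2]
      _ = (B₂ - B₁) ^ 2 * p := by simp [mul_comm]
      _ ≤ L * p / 1 := by
          rw [div_one]
          nlinarith [sq_nonneg (B₂ - B₁)]
  | succ w hw ih =>
    have hwr : (1:ℝ) ≤ (w:ℝ) := by exact_mod_cast hw
    have hc0 : (0:ℝ) < (w:ℝ) + 1 := by linarith
    have hw0 : (0:ℝ) < (w:ℝ) := by linarith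
    set c : ℝ := (w:ℝ) + 1 with hcdef
    set s : ℝ := η / c with hsdef
    set g := gradient W (β w) with hgdef
    set D := ‖β w - βstar‖ ^ 2 with hDdef
    have hD0 : 0 ≤ D := by positivity
    have hbw := hbox w hw
    have hs0 : 0 < s := by positivity
    -- inner product bound
    have h3 : ⟪g, β w - βstar⟫ ≤ -σ * D := by
      have h3a := firstOrder hdiff hconc hbw hβstar
      have h3b := firstOrder hdiff hconc hβstar hbw
      have h3c := optimality hdiff hβstar hmax hbw
      have e1 : βstar - β w = -(β w - βstar) := by abel
      rw [e1, inner_neg_right, norm_neg] at h3a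
      rw [← hDdef] at h3a h3b
      linarith
    -- gradient norm bound
    have h4 : ‖g‖ ^ 2 ≤ G ^ 2 * p := grad_norm_sq g (hG (β w) hbw)
    -- one step
    have hstep : ‖β (w + 1) - βstar‖ ^ 2 ≤ D + 2 * s * ⟪g, β w - βstar⟫ + s ^ 2 * ‖g‖ ^ 2 := by
      rw [hrec w hw]
      calc ‖boxProj p B₁ B₂ (β w + s • g) - βstar‖ ^ 2
          ≤ ‖β w + s • g - βstar‖ ^ 2 := boxProj_nonexpansive hB.le _ hβstar
        _ = ‖(β w - βstar) + s • g‖ ^ 2 := by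
            congr 1
            congr 1
            abel
        _ = D + 2 * s * ⟪g, β w - βstar⟫ + s ^ 2 * ‖g‖ ^ 2 := expand_sq _ _ _
    have hbound : ‖β (w + 1) - βstar‖ ^ 2 ≤ (1 - 2 * σ * s) * D + s ^ 2 * (G ^ 2 * p) := by
      have e2 : 2 * s * ⟪g, β w - βstar⟫ ≤ 2 * s * (-σ * D) := by
        apply mul_le_mul_of_nonneg_left h3 (by positivity)
      have e3 : s ^ 2 * ‖g‖ ^ 2 ≤ s ^ 2 * (G ^ 2 * p) :=
        mul_le_mul_of_nonneg_left h4 (by positivity)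
      calc ‖β (w + 1) - βstar‖ ^ 2 ≤ D + 2 * s * ⟪g, β w - βstar⟫ + s ^ 2 * ‖g‖ ^ 2 := hstep
        _ ≤ D + 2 * s * (-σ * D) + s ^ 2 * (G ^ 2 * p) := by linarith
        _ = (1 - 2 * σ * s) * D + s ^ 2 * (G ^ 2 * p) := by ring
    -- arithmetic
    have hσs : 1 / c ≤ σ * s := by
      have e0 : σ * s = (σ * η) / c := by rw [hsdef]; ring
      rw [e0, div_le_div_iff₀ hc0 hc0]
      have h1σ : 1 ≤ η * σ := (div_le_iff₀ hσ).mp hησ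
      nlinarith
    have hcoef : (1 - 2 * σ * s) * D ≤ (1 - 2 / c) * (L * p / (w:ℝ)) := by
      have c1 : 1 - 2 * σ * s ≤ 1 - 2 / c := by
        have e : 2 / c = 2 * (1 / c) := by ring
        rw [e]
        linarith
      have c2 : 0 ≤ 1 - 2 / c := by
        rw [sub_nonneg, div_le_one hc0]
        linarith
      calc (1 - 2 * σ * s) * D ≤ (1 - 2 / c) * D := mul_le_mul_of_nonneg_right c1 hD0
        _ ≤ (1 - 2 / c) * (L * p / (w:ℝ)) := mul_le_mul_of_nonneg_left ih c2
    have hnoise : s ^ 2 * (G ^ 2 * p) ≤ L * p / c ^ 2 := by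
      rw [hsdef, div_pow, div_mul_eq_mul_div]
      rw [div_le_div_iff₀ (by positivity) (by positivity : (0:ℝ) < c ^ 2)]
      have hηM2 : η ^ 2 ≤ M ^ 2 := pow_le_pow_left₀ hη0.le hηM 2
      have hη2 : η ^ 2 * G ^ 2 ≤ L :=
        le_trans (mul_le_mul_of_nonneg_right hηM2 (sq_nonneg G))
          (le_trans (le_of_eq (mul_comm _ _)) hL2)
      have hc2 : (0:ℝ) ≤ c ^ 2 := by positivity
      have hp0 : (0:ℝ) ≤ (p:ℝ) := by positivity
      have h5 : η ^ 2 * G ^ 2 * (p:ℝ) ≤ L * (p:ℝ) := mul_le_mul_of_nonneg_right hη2 hp0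
      calc η ^ 2 * (G ^ 2 * (p:ℝ)) * c ^ 2 = (η ^ 2 * G ^ 2 * (p:ℝ)) * c ^ 2 := by ring
        _ ≤ (L * (p:ℝ)) * c ^ 2 := mul_le_mul_of_nonneg_right h5 hc2
        _ = L * (p:ℝ) * c ^ 2 := by ring
    have harith : (1 - 2 / c) * (L * p / (w:ℝ)) + L * p / c ^ 2 ≤ L * p / c := by
      have key : (1 - 2 / c) / (w:ℝ) + 1 / c ^ 2 ≤ 1 / c := by
        rw [hcdef]
        exact key_arith hwr
      have hK : 0 ≤ L * (p:ℝ) := by positivity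
      have e4 : (1 - 2 / c) * (L * p / (w:ℝ)) + L * p / c ^ 2
          = (L * p) * ((1 - 2 / c) / (w:ℝ) + 1 / c ^ 2) := by ring
      have e5 : L * p / c = (L * p) * (1 / c) := by ring
      rw [e4, e5]
      exact mul_le_mul_of_nonneg_left key hK
    have final : ‖β (w + 1) - βstar‖ ^ 2 ≤ L * p / c := by
      calc ‖β (w + 1) - βstar‖ ^ 2 ≤ (1 - 2 * σ * s) * D + s ^ 2 * (G ^ 2 * p) := hbound
        _ ≤ (1 - 2 / c) * (L * p / (w:ℝ)) + L * p / c ^ 2 := by linarith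
        _ ≤ L * p / c := harith
    have : ((w + 1 : ℕ) : ℝ) = c := by push_cast [hcdef]; ring
    rw [this]
    exact final
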